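/- arXiv:1711.02910 — 2 statements merged into one kernel-verified Lean document; each statement's English description precedes it below -/
import Mathlib

section
/- For all natural numbers n, r, σ with 2 ≤ σ and 2 ≤ r ≤ n, the number T of strings of length n over the alphabet {0,…,σ−1} having exactly r runs satisfies log₂ T ≥ r·log₂(n(σ−1)/r) − log₂(n/r) − 2, where the inequality is over the real numbers. -/
private lemma fact_eq_prod (k : ℕ) : k.factorial = ∏ i ∈ Finset.range k, (k - i) := by
  rw [← Finset.prod_range_add_one_eq_factorial, ← Finset.prod_range_reflect]
  apply Finset.prod_congr rfl
  intro i hi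
  simp only [Finset.mem_range] at hi
  omega

private lemma pow_le_pow_mul_choose (m k : ℕ) (h : k ≤ m) :
    m ^ k ≤ k ^ k * m.choose k := by
  have e1 : m ^ k * ∏ i ∈ Finset.range k, (k - i) = ∏ i ∈ Finset.range k, (m * (k - i)) := by
    rw [Finset.prod_mul_distrib, Finset.prod_const, Finset.card_range]
  have e2 : k ^ k * ∏ i ∈ Finset.range k, (m - i) = ∏ i ∈ Finset.range k, (k * (m - i)) := by
    rw [Finset.prod_mul_distrib, Finset.prod_const, Finset.card_range]
  have h1 : m ^ k * k.factorial ≤ k ^ k * m.descFactorial k := by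
    rw [Nat.descFactorial_eq_prod_range, fact_eq_prod, e1, e2]
    apply Finset.prod_le_prod'
    intro i hi
    simp only [Finset.mem_range] at hi
    have h2 : k * i ≤ m * i := Nat.mul_le_mul_right _ h
    rw [Nat.mul_sub, Nat.mul_sub, mul_comm k m]
    exact Nat.sub_le_sub_left h2 _
  rw [Nat.descFactorial_eq_factorial_mul_choose, mul_comm k.factorial, ← mul_assoc] at h1
  exact Nat.le_of_mul_le_mul_right h1 (Nat.factorial_pos k)

private def nextLetter {σ : ℕ} (c : Fin σ) (d : Fin (σ - 1)) : Fin σ :=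
  if h : (d : ℕ) < (c : ℕ) then ⟨d, lt_trans h c.isLt⟩
  else ⟨d + 1, by have h1 := d.isLt; omega⟩

private lemma nextLetter_ne {σ : ℕ} (c : Fin σ) (d : Fin (σ - 1)) : nextLetter c d ≠ c := by
  unfold nextLetter
  split <;> (intro hh; rw [Fin.ext_iff] at hh; simp only [] at hh; omega)

private lemma nextLetter_inj {σ : ℕ} (c : Fin σ) {d1 d2 : Fin (σ - 1)}
    (h : nextLetter c d1 = nextLetter c d2) : d1 = d2 := by
  unfold nextLetter at h
  rw [Fin.ext_iff] at h
  rw [Fin.ext_iff]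
  split at h <;> split at h <;> simp only [] at h <;> omega

private def letters {σ : ℕ} (a : Fin σ) (D : ℕ → Fin (σ - 1)) : ℕ → Fin σ
  | 0 => a
  | k + 1 => nextLetter (letters a D k) (D k)

private lemma letters_succ_ne {σ : ℕ} (a : Fin σ) (D : ℕ → Fin (σ - 1)) (k : ℕ) :
    letters a D (k + 1) ≠ letters a D k := nextLetter_ne _ _

private def bcount {n : ℕ} (S : Finset (Fin (n - 1))) (m : ℕ) : ℕ :=
  (S.filter (fun j : Fin (n - 1) => (j : ℕ) < m)).card

private lemma bcount_zero {n : ℕ} (S : Finset (Fin (n - 1))) : bcount S 0 = 0 := by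
  simp [bcount]

private lemma bcount_succ {n : ℕ} (S : Finset (Fin (n - 1))) (m : ℕ) :
    bcount S (m + 1) = bcount S m + (S.filter (fun j : Fin (n - 1) => (j : ℕ) = m)).card := by
  unfold bcount
  rw [← Finset.card_union_of_disjoint]
  · congr 1
    ext j
    simp only [Finset.mem_union, Finset.mem_filter]
    constructor
    · rintro ⟨hj, hlt⟩
      rcases Nat.lt_succ_iff_lt_or_eq.mp hlt with h' | h'
      · exact Or.inl ⟨hj, h'⟩
      · exact Or.inr ⟨hj, h'⟩
    · rintro (⟨hj, h'⟩ | ⟨hj, h'⟩) <;> exact ⟨hj, by omega⟩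
  · rw [Finset.disjoint_left]
    intro j hj1 hj2
    simp only [Finset.mem_filter] at hj1 hj2
    omega

private lemma bcount_succ_mem {n : ℕ} (S : Finset (Fin (n - 1))) (i : Fin (n - 1)) :
    bcount S (i.val + 1) = bcount S i.val + (if i ∈ S then 1 else 0) := by
  rw [bcount_succ]
  congr 1
  split
  · rename_i h
    rw [show (S.filter (fun j : Fin (n - 1) => (j : ℕ) = i.val)) = {i} from ?_,
      Finset.card_singleton]
    apply Finset.eq_singleton_iff_unique_mem.mpr
    refine ⟨Finset.mem_filter.mpr ⟨h, rfl⟩, fun j hj => ?_⟩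
    exact Fin.ext (Finset.mem_filter.mp hj).2
  · rename_i h
    rw [Finset.filter_eq_empty_iff.mpr, Finset.card_empty]
    intro j hj hji
    exact h (Fin.ext hji ▸ hj)

private lemma bcount_succ_le {n : ℕ} (S : Finset (Fin (n - 1))) (m : ℕ) :
    bcount S (m + 1) ≤ bcount S m + 1 := by
  rw [bcount_succ]
  apply Nat.add_le_add_left
  apply Finset.card_le_one.mpr
  intro a ha b hb
  simp only [Finset.mem_filter] at ha hb
  exact Fin.ext (ha.2.trans hb.2.symm)

private lemma bcount_big {n : ℕ} (S : Finset (Fin (n - 1))) {m : ℕ} (hm : n - 1 ≤ m) :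
    bcount S m = S.card := by
  unfold bcount
  congr 1
  apply Finset.filter_true_of_mem
  intro j _
  have := j.isLt
  omega

private lemma jump {n r : ℕ} (hn : 2 ≤ n) (S : Finset (Fin (n - 1))) (hS : S.card = r - 1)
    {k : ℕ} (hk : k + 1 ≤ r - 1) :
    ∃ j : Fin (n - 1), bcount S j.val = k ∧ j ∈ S ∧ bcount S (j.val + 1) = k + 1 := by
  have hP : k + 1 ≤ bcount S (n - 1) := by rw [bcount_big S (le_refl _), hS]; omega
  classical
  have hex : ∃ m, k + 1 ≤ bcount S m := ⟨n - 1, hP⟩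
  let M := Nat.find hex
  have hMspec : k + 1 ≤ bcount S M := Nat.find_spec hex
  have hMle : M ≤ n - 1 := Nat.find_le hP
  have hM0 : M ≠ 0 := by
    intro h0
    rw [h0, bcount_zero] at hMspec
    omega
  have hmin : ¬ (k + 1 ≤ bcount S (M - 1)) := Nat.find_min hex (by omega)
  have hstep : bcount S (M - 1 + 1) ≤ bcount S (M - 1) + 1 := bcount_succ_le S _
  have hMeq : M - 1 + 1 = M := by omega
  rw [hMeq] at hstep
  have hc1 : bcount S (M - 1) = k := by omega
  have hc2 : bcount S M = k + 1 := by omega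
  have hmlt : M - 1 < n - 1 := by omega
  refine ⟨⟨M - 1, hmlt⟩, hc1, ?_, by rw [hMeq]; exact hc2⟩
  have := bcount_succ_mem S ⟨M - 1, hmlt⟩
  simp only at this
  rw [hMeq, hc1, hc2] at this
  by_contra hmem
  rw [if_neg hmem] at this
  omega

private lemma filter_breaks {n σ : ℕ} (a : Fin σ) (D : ℕ → Fin (σ - 1))
    (S : Finset (Fin (n - 1))) :
    (Finset.univ.filter (fun i : Fin (n - 1) =>
      letters a D (bcount S i.val) ≠ letters a D (bcount S (i.val + 1)))) = S := by
  ext i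
  simp only [Finset.mem_filter, Finset.mem_univ, true_and]
  rw [bcount_succ_mem]
  constructor
  · intro hne
    by_contra hmem
    rw [if_neg hmem] at hne
    simp at hne
  · intro hmem
    rw [if_pos hmem]
    exact (letters_succ_ne a D _).symm

private lemma card_lower (n r σ : ℕ) (hσ : 2 ≤ σ) (hr : 2 ≤ r) (hrn : r ≤ n) :
    (n - 1).choose (r - 1) * (σ * (σ - 1) ^ (r - 1)) ≤
      Nat.card {s : Fin n → Fin σ //
        (Finset.univ.filter (fun i : Fin (n - 1) =>
          s (Fin.castLE (Nat.sub_le n 1) i) ≠ s (Fin.cast (by omega) i.succ))).card = r - 1} := by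
  classical
  let D' : (Fin (r - 1) → Fin (σ - 1)) → ℕ → Fin (σ - 1) :=
    fun D k => D ⟨k % (r - 1), Nat.mod_lt _ (by omega)⟩
  let F : Fin σ × (Fin (r - 1) → Fin (σ - 1)) × {S : Finset (Fin (n - 1)) // S.card = r - 1} →
      {s : Fin n → Fin σ //
        (Finset.univ.filter (fun i : Fin (n - 1) =>
          s (Fin.castLE (Nat.sub_le n 1) i) ≠ s (Fin.cast (by omega) i.succ))).card = r - 1} :=
    fun x => ⟨fun i => letters x.1 (D' x.2.1) (bcount x.2.2.val i.val), by
      show (Finset.univ.filter (fun i : Fin (n - 1) =>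
        letters x.1 (D' x.2.1) (bcount x.2.2.val i.val) ≠
        letters x.1 (D' x.2.1) (bcount x.2.2.val (i.val + 1)))).card = r - 1
      rw [filter_breaks]
      exact x.2.2.2⟩
  have hinj : Function.Injective F := by
    rintro ⟨a1, D1, S1, hS1⟩ ⟨a2, D2, S2, hS2⟩ h
    have hf := congrArg Subtype.val h
    simp only [F] at hf
    have hpt : ∀ m : ℕ, m < n →
        letters a1 (D' D1) (bcount S1 m) = letters a2 (D' D2) (bcount S2 m) :=
      fun m hm => congrFun hf ⟨m, hm⟩
    have hSS : S1 = S2 := by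
      have h1 := filter_breaks a1 (D' D1) S1
      have h2 := filter_breaks a2 (D' D2) S2
      rw [← h1, ← h2]
      apply Finset.filter_congr
      intro i _
      have hb := i.isLt
      rw [hpt i.val (by omega), hpt (i.val + 1) (by omega)]
    subst hSS
    have hpt1 : ∀ m : ℕ, m < n →
        letters a1 (D' D1) (bcount S1 m) = letters a2 (D' D2) (bcount S1 m) := hpt
    have ha : a1 = a2 := by
      have := hpt1 0 (by omega)
      rwa [bcount_zero] at this
    have hD : ∀ k : ℕ, k + 1 ≤ r - 1 →
        letters a1 (D' D1) k = letters a2 (D' D2) k → D' D1 k = D' D2 k := by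
      intro k hk hLk
      obtain ⟨j, hj1, hjS, hj2⟩ := jump (r := r) (by omega) S1 hS1 hk
      have hjb := j.isLt
      have h1 := hpt1 (j.val + 1) (by omega)
      rw [hj2] at h1
      have h2 : nextLetter (letters a1 (D' D1) k) (D' D1 k) =
          nextLetter (letters a2 (D' D2) k) (D' D2 k) := h1
      rw [← hLk] at h2
      exact nextLetter_inj _ h2
    have hL : ∀ k : ℕ, k ≤ r - 1 → letters a1 (D' D1) k = letters a2 (D' D2) k := by
      intro k
      induction k with
      | zero => intro _; exact congrArg (letters · (D' D1) 0) ha ▸ (ha ▸ rfl)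
      | succ k ih =>
        intro hk
        have h1 := ih (by omega)
        have h2 := hD k hk h1
        show nextLetter (letters a1 (D' D1) k) (D' D1 k) =
          nextLetter (letters a2 (D' D2) k) (D' D2 k)
        rw [h1, h2]
    have hDD : D1 = D2 := by
      funext k
      have hkb := k.isLt
      have h1 := hD k.val (by omega) (hL k.val (by omega))
      have h2 : (⟨k.val % (r - 1), Nat.mod_lt _ (by omega)⟩ : Fin (r - 1)) = k :=
        Fin.ext (Nat.mod_eq_of_lt hkb)
      rw [show D' D1 k.val = D1 ⟨k.val % (r - 1), Nat.mod_lt _ (by omega)⟩ from rfl,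
        show D' D2 k.val = D2 ⟨k.val % (r - 1), Nat.mod_lt _ (by omega)⟩ from rfl, h2] at h1
      exact h1
    subst ha hDD
    rfl
  calc (n - 1).choose (r - 1) * (σ * (σ - 1) ^ (r - 1))
      = Nat.card (Fin σ × (Fin (r - 1) → Fin (σ - 1)) ×
          {S : Finset (Fin (n - 1)) // S.card = r - 1}) := by
        rw [Nat.card_eq_fintype_card]
        simp [Fintype.card_finset_len]
        ring
    _ ≤ _ := Nat.card_le_card_of_injective F hinj

private lemma analytic (n r σ : ℕ) (hσ : 2 ≤ σ) (hr : 2 ≤ r) (hrn : r ≤ n) (T : ℕ)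
    (hT : (n - 1).choose (r - 1) * (σ * (σ - 1) ^ (r - 1)) ≤ T) :
    (r : ℝ) * Real.logb 2 ((n : ℝ) * ((σ : ℝ) - 1) / (r : ℝ)) -
      Real.logb 2 ((n : ℝ) / (r : ℝ)) - 2 ≤ Real.logb 2 (T : ℝ) := by
  have hrR : (0:ℝ) < r := by positivity
  have hrR2 : (2:ℝ) ≤ r := by exact_mod_cast hr
  have hnR : (2:ℝ) ≤ n := by exact_mod_cast le_trans hr hrn
  have hnrR : (r:ℝ) ≤ n := by exact_mod_cast hrn
  have hσR : (2:ℝ) ≤ σ := by exact_mod_cast hσ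
  set x : ℝ := (n : ℝ) / (r : ℝ) with hxdef
  set y : ℝ := (σ : ℝ) - 1 with hydef
  have hxpos : 0 < x := by rw [hxdef]; positivity
  have hypos : 0 < y := by rw [hydef]; linarith
  have hy1 : 1 ≤ y := by rw [hydef]; linarith
  have hc0 := pow_le_pow_mul_choose (n - 1) (r - 1) (by omega)
  have hc1 : ((n:ℝ) - 1) ^ (r - 1) ≤ ((r:ℝ) - 1) ^ (r - 1) * ((n - 1).choose (r - 1) : ℝ) := by
    have h' := (Nat.cast_le (α := ℝ)).mpr hc0
    push_cast [Nat.cast_sub (show 1 ≤ n by omega), Nat.cast_sub (show 1 ≤ r by omega)] at h'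
    exact h'
  have hstep : x ≤ ((n:ℝ) - 1) / ((r:ℝ) - 1) := by
    rw [hxdef, div_le_div_iff₀ hrR (by linarith)]
    nlinarith
  have hchoose : x ^ (r - 1) ≤ ((n - 1).choose (r - 1) : ℝ) := by
    calc x ^ (r - 1) ≤ (((n:ℝ) - 1) / ((r:ℝ) - 1)) ^ (r - 1) :=
          pow_le_pow_left₀ (le_of_lt hxpos) hstep _
    _ ≤ ((n - 1).choose (r - 1) : ℝ) := by
        rw [div_pow, div_le_iff₀ (pow_pos (by linarith) _)]
        linarith [hc1]
  have hN : (x * y) ^ (r - 1) * y ≤ (T : ℝ) := by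
    calc (x * y) ^ (r - 1) * y = x ^ (r - 1) * y ^ (r - 1) * y := by rw [mul_pow]
    _ ≤ ((n - 1).choose (r - 1) : ℝ) * y ^ (r - 1) * (σ:ℝ) := by
        gcongr
        rw [hydef]; linarith
    _ = (((n - 1).choose (r - 1) * (σ * (σ - 1) ^ (r - 1)) : ℕ) : ℝ) := by
        push_cast [Nat.cast_sub (show 1 ≤ σ by omega)]
        ring
    _ ≤ (T : ℝ) := Nat.cast_le.mpr hT
  have hxypos : 0 < x * y := mul_pos hxpos hypos
  have hlog1 : Real.logb 2 ((x * y) ^ (r - 1) * y) ≤ Real.logb 2 (T : ℝ) :=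
    Real.logb_le_logb_of_le (by norm_num) (by positivity) hN
  have hlog2 : Real.logb 2 ((x * y) ^ (r - 1) * y) =
      ((r - 1 : ℕ) : ℝ) * Real.logb 2 (x * y) + Real.logb 2 y := by
    rw [Real.logb_mul (by positivity) (ne_of_gt hypos), Real.logb_pow]
  have hcast : ((r - 1 : ℕ) : ℝ) = (r : ℝ) - 1 := by
    push_cast [Nat.cast_sub (show 1 ≤ r by omega)]
    ring
  have hxy : Real.logb 2 (x * y) = Real.logb 2 x + Real.logb 2 y :=
    Real.logb_mul (ne_of_gt hxpos) (ne_of_gt hypos)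
  have hX : (n : ℝ) * ((σ:ℝ) - 1) / (r : ℝ) = x * y := by rw [hxdef, hydef]; ring
  rw [hX]
  rw [hcast] at hlog2
  have hexp : ((r:ℝ) - 1) * Real.logb 2 (x * y) =
      (r:ℝ) * Real.logb 2 (x * y) - Real.logb 2 (x * y) := by ring
  linarith [hlog1, hlog2, hxy, hexp]

/-- For `2 ≤ σ` and `2 ≤ r ≤ n`, the number `T` of strings of length `n` over
the alphabet `{0, …, σ-1}` with exactly `r` runs satisfies
`log₂ T ≥ r·log₂(n(σ-1)/r) − log₂(n/r) − 2` over the reals. -/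
theorem logb_card_strings_with_runs (n r σ : ℕ) (hσ : 2 ≤ σ) (hr : 2 ≤ r) (hrn : r ≤ n) :
    Real.logb 2 ((Nat.card {s : Fin n → Fin σ //
        (Finset.univ.filter (fun i : Fin (n - 1) =>
          s ⟨i.val, by omega⟩ ≠ s ⟨i.val + 1, by omega⟩)).card = r - 1} : ℕ) : ℝ) ≥
      (r : ℝ) * Real.logb 2 ((n : ℝ) * ((σ : ℝ) - 1) / (r : ℝ)) -
        Real.logb 2 ((n : ℝ) / (r : ℝ)) - 2 := by
  exact analytic n r σ hσ hr hrn _ (card_lower n r σ hσ hr hrn)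
end

section
/- Let m ≥ 1 and c : Fin m → ℕ, and let B be the Boolean list obtained by concatenating, for j = 0, 1, …, m−1 in order, the blocks consisting of c(j) copies of false followed by a single true. Then for every i with 1 ≤ i ≤ ∑_j c(j), the number of occurrences of true that precede the i-th occurrence of false in B equals b − 1, where b is the least index in [1..m] such that ∑_{j < b} c(j) ≥ i; equivalently, the 0-indexed position of the i-th false in B equals (i − 1) + (b − 1). In particular, the i-th false lies inside the b-th block. -/
private lemma unary_aux (L : List ℕ) (i b : ℕ) (hi : 1 ≤ i) (hb : 1 ≤ b)
    (hbm : b ≤ L.length)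
    (hge : i ≤ (L.take b).sum) (hlt : (L.take (b - 1)).sum < i) :
    ∃ hp : (i - 1) + (b - 1) <
        ((L.map (fun n => List.replicate n false ++ [true])).flatten).length,
      ((L.map (fun n => List.replicate n false ++ [true])).flatten)[(i-1)+(b-1)]'hp = false ∧
      (((L.map (fun n => List.replicate n false ++ [true])).flatten).take ((i-1)+(b-1))).count false = i - 1 ∧
      (((L.map (fun n => List.replicate n false ++ [true])).flatten).take ((i-1)+(b-1))).count true = b - 1 := by
  induction L generalizing i b with
  | nil => simp at hbm; omega
  | cons a L ih =>
    rcases Nat.eq_or_lt_of_le hb with hb1 | hb2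
    · -- b = 1
      have hb1 : b = 1 := hb1.symm
      subst hb1
      simp only [List.take_one, Nat.sub_self, List.take_zero] at hge hlt
      simp only [List.head?_cons, Option.toList_some, List.sum_cons, List.sum_nil,
        add_zero] at hge
      -- i ≤ a
      have hia : i ≤ a := by
        simpa using hge
      refine ⟨?_, ?_, ?_, ?_⟩
      · simp [List.length_append, List.length_replicate]
        omega
      · simp only [List.map_cons, List.flatten_cons]
        rw [List.getElem_append_left (by simp; omega),
          List.getElem_append_left (by simp; omega), List.getElem_replicate]
      · rw [List.map_cons, List.flatten_cons, List.take_append_of_le_length,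
          List.take_append_of_le_length, List.take_replicate]
        · simp [Nat.min_eq_left (by omega : i - 1 ≤ a)]
        · simp; omega
        · simp; omega
      · rw [List.map_cons, List.flatten_cons, List.take_append_of_le_length,
          List.take_append_of_le_length, List.take_replicate]
        · simp [List.count_replicate]
        · simp; omega
        · simp; omega
    · -- b ≥ 2
      obtain ⟨b', rfl⟩ : ∃ b', b = b' + 1 := ⟨b - 1, by omega⟩
      have hb' : 1 ≤ b' := by omega
      have hlt' : (L.take (b' - 1)).sum < i - a := by
        rw [show b' + 1 - 1 = b' by omega] at hlt
        obtain ⟨b'', rfl⟩ : ∃ b'', b' = b'' + 1 := ⟨b' - 1, by omega⟩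
        simp only [List.take_succ_cons, List.sum_cons] at hlt
        simp only [Nat.add_sub_cancel]
        omega
      have hai : a < i := by
        rw [show b' + 1 - 1 = b' by omega] at hlt
        obtain ⟨b'', rfl⟩ : ∃ b'', b' = b'' + 1 := ⟨b' - 1, by omega⟩
        simp only [List.take_succ_cons, List.sum_cons] at hlt
        omega
      have hge' : i - a ≤ (L.take b').sum := by
        simp only [List.take_succ_cons, List.sum_cons] at hge
        omega
      have hbm' : b' ≤ L.length := by simpa using Nat.le_of_succ_le_succ hbm
      obtain ⟨hp, h1, h2, h3⟩ := ih (i - a) b' (by omega) hb' hbm' hge' hlt'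
      set B' := ((L.map (fun n => List.replicate n false ++ [true])).flatten) with hB'
      have hlen : (List.replicate a false ++ [true]).length = a + 1 := by simp
      have hpos : (i - 1) + (b' + 1 - 1) = (a + 1) + ((i - a - 1) + (b' - 1)) := by omega
      rw [List.map_cons, List.flatten_cons, hpos]
      refine ⟨?_, ?_, ?_, ?_⟩
      · rw [List.length_append, hlen]; omega
      · rw [List.getElem_append_right (by rw [hlen]; omega)]
        have heq : (a + 1) + ((i - a - 1) + (b' - 1)) -
            (List.replicate a false ++ [true]).length = (i - a - 1) + (b' - 1) := by
          rw [hlen]; omega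
        simp only [heq]
        exact h1
      · rw [show (a+1) + ((i-a-1)+(b'-1)) = (List.replicate a false ++ [true]).length + ((i-a-1)+(b'-1)) from by rw [hlen],
          List.take_length_add_append]
        rw [List.count_append]
        simp only [List.count_append, List.count_replicate]
        rw [h2]
        simp
        omega
      · rw [show (a+1) + ((i-a-1)+(b'-1)) = (List.replicate a false ++ [true]).length + ((i-a-1)+(b'-1)) from by rw [hlen],
          List.take_length_add_append]
        rw [List.count_append]
        simp only [List.count_append, List.count_replicate]
        rw [h3]
        simp
        omega

private lemma sum_take_ofFn {m : ℕ} (c : Fin m → ℕ) (n : ℕ) (h : n ≤ m) :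
    ((List.ofFn c).take n).sum = ∑ j : Fin n, c (Fin.castLE h j) := by
  induction n with
  | zero => simp
  | succ k ih =>
    rw [List.take_succ, List.sum_append]
    have hk : k < (List.ofFn c).length := by simpa using by omega
    rw [List.getElem?_eq_getElem hk]
    rw [ih (by omega)]
    simp [Fin.sum_univ_castSucc, List.getElem_ofFn]
    rfl

/-- Let `B` be the concatenation of the unary encodings of `c 0, …, c (m-1)`
(each `c j` encoded as `c j` copies of `false` followed by one `true`). For
`1 ≤ i ≤ ∑ c j`, let `b` be the least index in `[1..m]` with `∑_{j < b} c j ≥ i`.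
Then the 0-indexed position of the `i`-th occurrence of `false` in `B` is
`(i - 1) + (b - 1)`: the letter there is `false`, the prefix before it contains
exactly `i - 1` occurrences of `false` and exactly `b - 1` occurrences of `true`
(so the `i`-th `false` lies in the `b`-th block). -/
theorem unary_select_false (m : ℕ) (hm : 1 ≤ m) (c : Fin m → ℕ) (B : List Bool)
    (hB : B = (List.ofFn (fun j : Fin m => List.replicate (c j) false ++ [true])).flatten)
    (i : ℕ) (hi : 1 ≤ i) (him : i ≤ ∑ j, c j)
    (b : ℕ) (hb : 1 ≤ b) (hbm : b ≤ m)
    (hge : i ≤ ∑ j : Fin b, c ⟨j.val, by omega⟩)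
    (hleast : ∀ b' : ℕ, ∀ _hb' : b' < b, (∑ j : Fin b', c ⟨j.val, by omega⟩) < i) :
    ∃ hp : (i - 1) + (b - 1) < B.length,
      B[(i - 1) + (b - 1)]'hp = false ∧
      (B.take ((i - 1) + (b - 1))).count false = i - 1 ∧
      (B.take ((i - 1) + (b - 1))).count true = b - 1 := by
  have hmap : B = ((List.ofFn c).map (fun n => List.replicate n false ++ [true])).flatten := by
    rw [hB, List.map_ofFn]
    rfl
  subst hmap
  apply unary_aux _ _ _ hi hb
  · simpa using hbm
  · rw [sum_take_ofFn c b hbm]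
    exact hge
  · rw [sum_take_ofFn c (b - 1) (by omega)]
    exact hleast (b - 1) (by omega)
end
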